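/- Let U ⊆ ℂ ∖ ((−∞,0] ∪ {0}) be open, F : U → ℂ holomorphic, R > 0, and set Z_m(c) = (1/2π)(c − c·log c + F(c)), Z_e(c) = −i·c. On the tangent space ℂ × ℝ × ℝ (vectors w = (w_c, w_m, w_e)) at a point with base coordinate c ∈ U, define the ℂ-valued 2-form Ω(u,v) = [Z_m′(c)u_c·v_e − Z_m′(c)v_c·u_e] + [Z_e′(c)u_c·v_m − Z_e′(c)v_c·u_m] and the real 2-form ω(u,v) = πR·Re[ Z_m′(c)u_c·conj(Z_e′(c)v_c) − Z_m′(c)v_c·conj(Z_e′(c)u_c) ] + (1/2πR)·(u_m v_e − v_m u_e). With the wedge product of two 2-forms defined by (α∧β)(v₁,v₂,v₃,v₄) = α(v₁,v₂)β(v₃,v₄) − α(v₁,v₃)β(v₂,v₄) + α(v₁,v₄)β(v₂,v₃) + β(v₁,v₂)α(v₃,v₄) − β(v₁,v₃)α(v₂,v₄) + β(v₁,v₄)α(v₂,v₃), the following hold at every point: ω∧Ω = 0, ω∧Ω̄ = 0 (Ω̄ the pointwise complex conjugate of Ω), and ω∧ω = (1/2)·Ω∧Ω̄. -/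

import Mathlib

/-- The wedge product of two 2-forms (as `ℂ`-valued bi-linear expressions),
evaluated on four vectors. -/
noncomputable def wedge2 {V : Type*} (α β : V → V → ℂ) : V → V → V → V → ℂ :=
  fun v₁ v₂ v₃ v₄ =>
    α v₁ v₂ * β v₃ v₄ - α v₁ v₃ * β v₂ v₄ + α v₁ v₄ * β v₂ v₃
      + β v₁ v₂ * α v₃ v₄ - β v₁ v₃ * α v₂ v₄ + β v₁ v₄ * α v₂ v₃


set_option maxHeartbeats 4000000 in
/-- Generic algebraic form of Lemma 5.2, for arbitrary complex coefficients
`a = dZ_m/dc` and `b = dZ_e/dc`. -/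
theorem stmt7_aux (a b : ℂ) (R : ℝ) (hR : 0 < R)
    (Ω : ℂ × ℝ × ℝ → ℂ × ℝ × ℝ → ℂ)
    (hΩ : ∀ u v : ℂ × ℝ × ℝ, Ω u v =
      (a * u.1 * (v.2.2 : ℂ) - a * v.1 * (u.2.2 : ℂ))
        + (b * u.1 * (v.2.1 : ℂ) - b * v.1 * (u.2.1 : ℂ)))
    (ω : ℂ × ℝ × ℝ → ℂ × ℝ × ℝ → ℝ)
    (hω : ∀ u v : ℂ × ℝ × ℝ, ω u v =
      Real.pi * R * (a * u.1 * (starRingEnd ℂ) (b * v.1)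
        - a * v.1 * (starRingEnd ℂ) (b * u.1)).re
        + (1 / (2 * Real.pi * R)) * (u.2.1 * v.2.2 - v.2.1 * u.2.2)) :
    (∀ v₁ v₂ v₃ v₄ : ℂ × ℝ × ℝ,
        wedge2 (fun u v => (ω u v : ℂ)) Ω v₁ v₂ v₃ v₄ = 0)
    ∧ (∀ v₁ v₂ v₃ v₄ : ℂ × ℝ × ℝ,
        wedge2 (fun u v => (ω u v : ℂ)) (fun u v => (starRingEnd ℂ) (Ω u v)) v₁ v₂ v₃ v₄ = 0)
    ∧ (∀ v₁ v₂ v₃ v₄ : ℂ × ℝ × ℝ,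
        wedge2 (fun u v => (ω u v : ℂ)) (fun u v => (ω u v : ℂ)) v₁ v₂ v₃ v₄
          = (1 / 2) * wedge2 Ω (fun u v => (starRingEnd ℂ) (Ω u v)) v₁ v₂ v₃ v₄) := by
  have hR' : R ≠ 0 := ne_of_gt hR
  refine ⟨?_, ?_, ?_⟩ <;>
  · rintro ⟨c₁, m₁, e₁⟩ ⟨c₂, m₂, e₂⟩ ⟨c₃, m₃, e₃⟩ ⟨c₄, m₄, e₄⟩
    obtain ⟨ar, ai⟩ := a
    obtain ⟨br, bi⟩ := b
    obtain ⟨x₁, y₁⟩ := c₁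
    obtain ⟨x₂, y₂⟩ := c₂
    obtain ⟨x₃, y₃⟩ := c₃
    obtain ⟨x₄, y₄⟩ := c₄
    simp only [wedge2, hω, hΩ]
    simp only [Complex.ext_iff, Complex.add_re, Complex.add_im, Complex.sub_re,
      Complex.sub_im, Complex.mul_re, Complex.mul_im, Complex.ofReal_re,
      Complex.ofReal_im, Complex.conj_re, Complex.conj_im, Complex.zero_re, Complex.zero_im,
      Complex.one_re, Complex.one_im, Complex.div_re, Complex.div_im, Complex.normSq_mk,
      Complex.re_ofNat, Complex.im_ofNat, Complex.normSq_ofNat]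
    constructor <;> field_simp <;> ring

/-- Lemma 5.2: with `Ω = dZ_m∧dθ_e + dZ_e∧dθ_m` and
`ω = πR·Re(dZ_m∧dZ̄_e) + (1/2πR)dθ_m∧dθ_e` at a point `c ∈ U`, one has
`ω∧Ω = 0`, `ω∧Ω̄ = 0`, and `ω∧ω = (1/2)·Ω∧Ω̄`. -/
theorem stmt7 (U : Set ℂ) (hU : IsOpen U) (hUs : U ⊆ Complex.slitPlane)
    (F : ℂ → ℂ) (hF : DifferentiableOn ℂ F U) (R : ℝ) (hR : 0 < R)
    (Zm Ze : ℂ → ℂ)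
    (hZm : ∀ c : ℂ, Zm c = ((1 / (2 * Real.pi) : ℝ) : ℂ) * (c - c * Complex.log c + F c))
    (hZe : ∀ c : ℂ, Ze c = -Complex.I * c)
    (c : ℂ) (hc : c ∈ U)
    (Ω : ℂ × ℝ × ℝ → ℂ × ℝ × ℝ → ℂ)
    (hΩ : ∀ u v : ℂ × ℝ × ℝ, Ω u v =
      (deriv Zm c * u.1 * (v.2.2 : ℂ) - deriv Zm c * v.1 * (u.2.2 : ℂ))
        + (deriv Ze c * u.1 * (v.2.1 : ℂ) - deriv Ze c * v.1 * (u.2.1 : ℂ)))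
    (ω : ℂ × ℝ × ℝ → ℂ × ℝ × ℝ → ℝ)
    (hω : ∀ u v : ℂ × ℝ × ℝ, ω u v =
      Real.pi * R * (deriv Zm c * u.1 * (starRingEnd ℂ) (deriv Ze c * v.1)
        - deriv Zm c * v.1 * (starRingEnd ℂ) (deriv Ze c * u.1)).re
        + (1 / (2 * Real.pi * R)) * (u.2.1 * v.2.2 - v.2.1 * u.2.2)) :
    (∀ v₁ v₂ v₃ v₄ : ℂ × ℝ × ℝ,
        wedge2 (fun u v => (ω u v : ℂ)) Ω v₁ v₂ v₃ v₄ = 0)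
    ∧ (∀ v₁ v₂ v₃ v₄ : ℂ × ℝ × ℝ,
        wedge2 (fun u v => (ω u v : ℂ)) (fun u v => (starRingEnd ℂ) (Ω u v)) v₁ v₂ v₃ v₄ = 0)
    ∧ (∀ v₁ v₂ v₃ v₄ : ℂ × ℝ × ℝ,
        wedge2 (fun u v => (ω u v : ℂ)) (fun u v => (ω u v : ℂ)) v₁ v₂ v₃ v₄
          = (1 / 2) * wedge2 Ω (fun u v => (starRingEnd ℂ) (Ω u v)) v₁ v₂ v₃ v₄) := by
  exact stmt7_aux (deriv Zm c) (deriv Ze c) R hR Ω hΩ ω hω
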